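/- For a real variety X, χ_R(Sym^2 X) = (χ_R(X)^2 + χ_C(X))/2, as follows from the real realization of the Kapranov zeta function χ_R(Z_Kap(X,t)) = (1/(1-t^2))^{(χ_C - χ_R)/2} · (1/(1-t))^{χ_R}. -/

import Mathlib

open PowerSeries

private lemma coeff_mul_sub_Xsq (f : PowerSeries ℤ) :
    (PowerSeries.coeff 0 (f * (1 - X ^ 2)) = PowerSeries.coeff 0 f) ∧
    (PowerSeries.coeff 1 (f * (1 - X ^ 2)) = PowerSeries.coeff 1 f) ∧
    (PowerSeries.coeff 2 (f * (1 - X ^ 2)) = PowerSeries.coeff 2 f - PowerSeries.coeff 0 f) := by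
  have h : f * (1 - X ^ 2) = f - f * X ^ 2 := by ring
  refine ⟨?_, ?_, ?_⟩ <;>
    simp [h, map_sub, PowerSeries.coeff_mul_X_pow', PowerSeries.coeff_mul_X_pow]

private lemma coeff_mul_sub_X (f : PowerSeries ℤ) :
    (PowerSeries.coeff 0 (f * (1 - X)) = PowerSeries.coeff 0 f) ∧
    (PowerSeries.coeff 1 (f * (1 - X)) = PowerSeries.coeff 1 f - PowerSeries.coeff 0 f) ∧
    (PowerSeries.coeff 2 (f * (1 - X)) = PowerSeries.coeff 2 f - PowerSeries.coeff 1 f) := by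
  have h : f * (1 - X) = f - f * X := by ring
  refine ⟨?_, ?_, ?_⟩ <;>
    simp [h, map_sub, PowerSeries.coeff_succ_mul_X]

private lemma upow_coeff (u : (PowerSeries ℤ)ˣ)
    (hu : (u : PowerSeries ℤ) = 1 - PowerSeries.X ^ 2) (n : ℤ) :
    (PowerSeries.coeff 0 ((u ^ n : (PowerSeries ℤ)ˣ) : PowerSeries ℤ) = 1) ∧
    (PowerSeries.coeff 1 ((u ^ n : (PowerSeries ℤ)ˣ) : PowerSeries ℤ) = 0) ∧
    (PowerSeries.coeff 2 ((u ^ n : (PowerSeries ℤ)ˣ) : PowerSeries ℤ) = -n) := by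
  induction n using Int.induction_on with
  | zero => simp
  | succ k ih =>
    have h : ((u ^ ((k : ℤ) + 1) : (PowerSeries ℤ)ˣ) : PowerSeries ℤ)
        = ((u ^ (k : ℤ) : (PowerSeries ℤ)ˣ) : PowerSeries ℤ) * (1 - X ^ 2) := by
      rw [← hu, ← Units.val_mul, zpow_add_one]
    obtain ⟨h0, h1, h2⟩ := ih
    rw [h]
    obtain ⟨g0, g1, g2⟩ := coeff_mul_sub_Xsq ((u ^ (k : ℤ) : (PowerSeries ℤ)ˣ) : PowerSeries ℤ)
    refine ⟨by rw [g0, h0], by rw [g1, h1], by rw [g2, h0, h2]; ring⟩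
  | pred k ih =>
    have h : ((u ^ (-(k : ℤ) : ℤ) : (PowerSeries ℤ)ˣ) : PowerSeries ℤ)
        = ((u ^ (-(k : ℤ) - 1 : ℤ) : (PowerSeries ℤ)ˣ) : PowerSeries ℤ) * (1 - X ^ 2) := by
      rw [← hu, ← Units.val_mul, ← zpow_add_one]
      ring_nf
    obtain ⟨h0, h1, h2⟩ := ih
    rw [h] at h0 h1 h2
    obtain ⟨g0, g1, g2⟩ :=
      coeff_mul_sub_Xsq ((u ^ (-(k : ℤ) - 1 : ℤ) : (PowerSeries ℤ)ˣ) : PowerSeries ℤ)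
    rw [g0] at h0
    rw [g1] at h1
    rw [g2, h0] at h2
    exact ⟨h0, h1, by omega⟩

private lemma vpow_coeff (v : (PowerSeries ℤ)ˣ)
    (hv : (v : PowerSeries ℤ) = 1 - PowerSeries.X) (n : ℤ) :
    (PowerSeries.coeff 0 ((v ^ n : (PowerSeries ℤ)ˣ) : PowerSeries ℤ) = 1) ∧
    (PowerSeries.coeff 1 ((v ^ n : (PowerSeries ℤ)ˣ) : PowerSeries ℤ) = -n) ∧
    (2 * PowerSeries.coeff 2 ((v ^ n : (PowerSeries ℤ)ˣ) : PowerSeries ℤ) = n * (n - 1)) := by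
  induction n using Int.induction_on with
  | zero => simp
  | succ k ih =>
    have h : ((v ^ ((k : ℤ) + 1) : (PowerSeries ℤ)ˣ) : PowerSeries ℤ)
        = ((v ^ (k : ℤ) : (PowerSeries ℤ)ˣ) : PowerSeries ℤ) * (1 - X) := by
      rw [← hv, ← Units.val_mul, zpow_add_one]
    obtain ⟨h0, h1, h2⟩ := ih
    rw [h]
    obtain ⟨g0, g1, g2⟩ := coeff_mul_sub_X ((v ^ (k : ℤ) : (PowerSeries ℤ)ˣ) : PowerSeries ℤ)
    refine ⟨by rw [g0, h0], by rw [g1, h0, h1]; ring, ?_⟩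
    rw [g2, mul_sub, h2]
    rw [h1]
    ring
  | pred k ih =>
    have h : ((v ^ (-(k : ℤ) : ℤ) : (PowerSeries ℤ)ˣ) : PowerSeries ℤ)
        = ((v ^ (-(k : ℤ) - 1 : ℤ) : (PowerSeries ℤ)ˣ) : PowerSeries ℤ) * (1 - X) := by
      rw [← hv, ← Units.val_mul, ← zpow_add_one]
      ring_nf
    obtain ⟨h0, h1, h2⟩ := ih
    rw [h] at h0 h1 h2
    obtain ⟨g0, g1, g2⟩ :=
      coeff_mul_sub_X ((v ^ (-(k : ℤ) - 1 : ℤ) : (PowerSeries ℤ)ˣ) : PowerSeries ℤ)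
    rw [g0] at h0
    rw [g1, h0] at h1
    rw [g2, mul_sub] at h2
    refine ⟨h0, by omega, by nlinarith [h1, h2]⟩

/-- Real realization of the Kapranov zeta function: for integers r, c with
c ≡ r (mod 2), the coefficient of t² in (1-t²)^{-(c-r)/2}(1-t)^{-r} equals
(r² + c)/2. -/
theorem coeff_two_real_zeta (u v : (PowerSeries ℤ)ˣ)
    (hu : (u : PowerSeries ℤ) = 1 - PowerSeries.X ^ 2)
    (hv : (v : PowerSeries ℤ) = 1 - PowerSeries.X)
    (r c m : ℤ) (hm : 2 * m = c - r) :
    2 * PowerSeries.coeff 2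
        ((u ^ (-m) * v ^ (-r) : (PowerSeries ℤ)ˣ) : PowerSeries ℤ)
      = r ^ 2 + c := by
  obtain ⟨u0, u1, u2⟩ := upow_coeff u hu (-m)
  obtain ⟨v0, v1, v2⟩ := vpow_coeff v hv (-r)
  rw [Units.val_mul, PowerSeries.coeff_mul,
    Finset.Nat.sum_antidiagonal_eq_sum_range_succ_mk]
  simp only [Finset.sum_range_succ, Finset.sum_range_zero, Nat.sub_zero, Nat.sub_self,
    Nat.reduceSub, zero_add]
  rw [u0, u1, u2, v0, v1]
  nlinarith [v2, hm]
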